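/- Let 2/3 < α ≤ 1 and σ > 3(1−α)/2. There exist ε₀ > 0 and C > 0 such that for every real M ≥ 1, ∑_{n∈ℤ} ⟨n⟩^{−2σ} ∑ ⟨n₁⟩^{−α} ⟨n₂⟩^{−α} ⟨n₃⟩^{−α} ≤ C · M^{−ε₀}, where the inner sum ranges over all triples (n₁,n₂,n₃) ∈ ℤ³ with n₁ − n₂ + n₃ = n, n₂ ≠ n₁, n₂ ≠ n₃ and max(|n₁|,|n₂|,|n₃|) > M. -/

import Mathlib

/-- The Japanese bracket `⟨x⟩ = (1 + x²)^(1/2)`. -/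
noncomputable def jb (x : ℝ) : ℝ := Real.sqrt (1 + x ^ 2)

lemma one_le_jb (x : ℝ) : 1 ≤ jb x := by
  rw [jb, Real.one_le_sqrt]; nlinarith [sq_nonneg x]

lemma jb_pos (x : ℝ) : 0 < jb x := lt_of_lt_of_le one_pos (one_le_jb x)

lemma jb_sq (x : ℝ) : jb x ^ 2 = 1 + x ^ 2 :=
  Real.sq_sqrt (by nlinarith [sq_nonneg x])

lemma abs_le_jb (x : ℝ) : |x| ≤ jb x := by
  rw [← Real.sqrt_sq_eq_abs, jb]
  exact Real.sqrt_le_sqrt (by nlinarith)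

lemma jb_neg (x : ℝ) : jb (-x) = jb x := by simp [jb]

lemma jb_mul_ge (x y : ℝ) : 1 + |x * y| ≤ jb x * jb y := by
  have h : (1 + |x * y|) ^ 2 ≤ (jb x * jb y) ^ 2 := by
    rw [mul_pow, jb_sq, jb_sq, abs_mul]
    nlinarith [sq_nonneg (|x| - |y|), abs_nonneg x, abs_nonneg y, sq_abs x, sq_abs y]
  calc 1 + |x * y| = Real.sqrt ((1 + |x * y|) ^ 2) :=
        (Real.sqrt_sq (by positivity)).symm
    _ ≤ Real.sqrt ((jb x * jb y) ^ 2) := Real.sqrt_le_sqrt h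
    _ = jb x * jb y := Real.sqrt_sq (mul_pos (jb_pos x) (jb_pos y)).le

lemma jb_add_le (x y : ℝ) : jb (x + y) ≤ jb x + jb y := by
  have h := jb_mul_ge x y
  have hx := jb_sq x; have hy := jb_sq y
  have key : 1 + (x + y) ^ 2 ≤ (jb x + jb y) ^ 2 := by
    have : x * y ≤ |x * y| := le_abs_self _
    nlinarith
  calc jb (x + y) = Real.sqrt (1 + (x + y) ^ 2) := rfl
    _ ≤ Real.sqrt ((jb x + jb y) ^ 2) := Real.sqrt_le_sqrt key
    _ = jb x + jb y := Real.sqrt_sq (add_pos (jb_pos x) (jb_pos y)).le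

open ENNReal

noncomputable def F (t : ℝ) (n : ℤ) : ℝ≥0∞ := ENNReal.ofReal (jb n ^ (-t))

noncomputable def Z (t : ℝ) : ℝ≥0∞ := ∑' n : ℤ, F t n

lemma F_mul (s t : ℝ) (n : ℤ) : F s n * F t n = F (s + t) n := by
  rw [F, F, F, ← ENNReal.ofReal_mul (Real.rpow_nonneg (jb_pos _).le _), ← Real.rpow_add (jb_pos _), neg_add]

lemma F_neg (t : ℝ) (n : ℤ) : F t (-n) = F t n := by
  rw [F, F]; push_cast; rw [jb_neg]

lemma F_mono {s t : ℝ} (h : s ≤ t) (n : ℤ) : F t n ≤ F s n :=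
  ENNReal.ofReal_le_ofReal (Real.rpow_le_rpow_of_exponent_le (one_le_jb _) (by linarith))

lemma Z_ne_top {t : ℝ} (ht : 1 < t) : Z t ≠ ⊤ := by
  have hsum : Summable fun n : ℤ => |(n : ℝ)| ^ (-t) := Real.summable_abs_int_rpow ht
  have hb : ∀ n : ℤ, F t n ≤ ENNReal.ofReal (|(n : ℝ)| ^ (-t)) +
      (if n = (0 : ℤ) then 1 else 0) := by
    intro n
    by_cases hn : n = 0
    · subst hn
      simp only [if_pos rfl]
      have : jb ((0:ℤ):ℝ) ^ (-t) ≤ 1 := by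
        rw [show ((0:ℤ):ℝ) = 0 by norm_num]
        calc jb 0 ^ (-t) ≤ jb 0 ^ (0:ℝ) :=
              Real.rpow_le_rpow_of_exponent_le (one_le_jb _) (by linarith)
          _ = 1 := Real.rpow_zero _
      calc F t 0 ≤ ENNReal.ofReal 1 := ENNReal.ofReal_le_ofReal this
        _ = 1 := ENNReal.ofReal_one
        _ ≤ _ := le_add_self
    · rw [if_neg hn, add_zero, F]
      apply ENNReal.ofReal_le_ofReal
      have h0 : (0:ℝ) < |(n:ℝ)| := by
        simp only [abs_pos, ne_eq, Int.cast_eq_zero]; exact hn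
      exact Real.rpow_le_rpow_of_nonpos h0 (abs_le_jb _) (by linarith)
  have : Z t ≤ (∑' n : ℤ, ENNReal.ofReal (|(n : ℝ)| ^ (-t))) +
      ∑' n : ℤ, (if n = (0 : ℤ) then (1:ℝ≥0∞) else 0) := by
    rw [← ENNReal.tsum_add]; exact ENNReal.tsum_le_tsum hb
  refine ne_top_of_le_ne_top ?_ this
  apply ENNReal.add_ne_top.mpr
  constructor
  · rw [← ENNReal.ofReal_tsum_of_nonneg (fun n => Real.rpow_nonneg (abs_nonneg _) _) hsum]
    exact ENNReal.ofReal_ne_top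
  · rw [tsum_ite_eq]; exact one_ne_top

lemma F_zero (n : ℤ) : F 0 n = 1 := by
  rw [F, neg_zero, Real.rpow_zero, ENNReal.ofReal_one]

lemma lemB {u v : ℝ} (hu : 0 < u) (hv : 0 < v) (n : ℤ) :
    ∑' k : ℤ, F u k * F v (n - k) ≤ 2 * Z (u + v) := by
  have hpt : ∀ k : ℤ, F u k * F v (n - k) ≤ F (u + v) k + F (u + v) (n - k) := by
    intro k
    rcases le_total (jb (k : ℝ)) (jb ((n - k : ℤ) : ℝ)) with h | h
    · have h1 : F v (n - k) ≤ F v k :=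
        ENNReal.ofReal_le_ofReal (Real.rpow_le_rpow_of_nonpos (jb_pos _) h (by linarith))
      calc F u k * F v (n - k) ≤ F u k * F v k := mul_le_mul_right h1 _
        _ = F (u + v) k := F_mul u v k
        _ ≤ _ := le_self_add
    · have h1 : F u k ≤ F u (n - k) :=
        ENNReal.ofReal_le_ofReal (Real.rpow_le_rpow_of_nonpos (jb_pos _) h (by linarith))
      calc F u k * F v (n - k) ≤ F u (n - k) * F v (n - k) := mul_le_mul_left h1 _
        _ = F (u + v) (n - k) := F_mul u v (n - k)
        _ ≤ _ := le_add_self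
  calc ∑' k : ℤ, F u k * F v (n - k) ≤ ∑' k : ℤ, (F (u + v) k + F (u + v) (n - k)) :=
        ENNReal.tsum_le_tsum hpt
    _ = Z (u + v) + ∑' k : ℤ, F (u + v) (n - k) := by rw [ENNReal.tsum_add]; rfl
    _ = Z (u + v) + Z (u + v) := by
        congr 1
        exact Equiv.tsum_eq (Equiv.subLeft n) (F (u + v))
    _ = 2 * Z (u + v) := (two_mul _).symm

lemma jb_rpow_max {θ : ℝ} (hθ : 0 ≤ θ) (x y : ℝ) :
    jb (x + y) ^ θ ≤ 2 ^ θ * (jb x ^ θ + jb y ^ θ) := by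
  have hxy : jb (x + y) ≤ jb x + jb y := jb_add_le x y
  rcases le_total (jb x) (jb y) with h | h
  · calc jb (x + y) ^ θ ≤ (2 * jb y) ^ θ :=
          Real.rpow_le_rpow (jb_pos _).le (by linarith) hθ
      _ = 2 ^ θ * jb y ^ θ := Real.mul_rpow (by norm_num) (jb_pos _).le
      _ ≤ 2 ^ θ * (jb x ^ θ + jb y ^ θ) := by
          have : (0:ℝ) ≤ jb x ^ θ := Real.rpow_nonneg (jb_pos _).le _
          nlinarith [Real.rpow_nonneg (jb_pos y).le θ, Real.rpow_pos_of_pos (show (0:ℝ)<2 by norm_num) θ]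
  · calc jb (x + y) ^ θ ≤ (2 * jb x) ^ θ :=
          Real.rpow_le_rpow (jb_pos _).le (by linarith) hθ
      _ = 2 ^ θ * jb x ^ θ := Real.mul_rpow (by norm_num) (jb_pos _).le
      _ ≤ 2 ^ θ * (jb x ^ θ + jb y ^ θ) := by
          have : (0:ℝ) ≤ jb y ^ θ := Real.rpow_nonneg (jb_pos _).le _
          nlinarith [Real.rpow_nonneg (jb_pos x).le θ, Real.rpow_pos_of_pos (show (0:ℝ)<2 by norm_num) θ]

lemma lemA {a b θ : ℝ} (hθ0 : 0 < θ) (hθa : θ < a) (hθb : θ < b) (hθab : θ < a + b - 1)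
    (n : ℤ) :
    ∑' k : ℤ, F a k * F b (n - k) ≤
      ENNReal.ofReal (2 ^ θ) * (4 * Z (a + b - θ)) * F θ n := by
  have hFneg : ∀ m : ℤ, F (-θ) m = ENNReal.ofReal (jb (m : ℝ) ^ θ) := by
    intro m; rw [F, neg_neg]
  have hkey : ∀ k : ℤ, F (-θ) n ≤ ENNReal.ofReal (2 ^ θ) * (F (-θ) k + F (-θ) (n - k)) := by
    intro k
    have hcast : ((n : ℤ) : ℝ) = ((k : ℤ) : ℝ) + (((n - k) : ℤ) : ℝ) := by push_cast; ring
    have hr : jb ((n : ℤ) : ℝ) ^ θ ≤ 2 ^ θ * (jb ((k : ℤ) : ℝ) ^ θ + jb (((n - k) : ℤ) : ℝ) ^ θ) := by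
      rw [hcast]; exact jb_rpow_max hθ0.le _ _
    rw [hFneg, hFneg, hFneg, ← ENNReal.ofReal_add (Real.rpow_nonneg (jb_pos _).le _)
      (Real.rpow_nonneg (jb_pos _).le _), ← ENNReal.ofReal_mul (by positivity)]
    exact ENNReal.ofReal_le_ofReal hr
  have hpt : ∀ k : ℤ, F a k * F b (n - k) ≤
      ENNReal.ofReal (2 ^ θ) * F θ n *
        (F (a - θ) k * F b (n - k) + F a k * F (b - θ) (n - k)) := by
    intro k
    have h1 : F a k * F b (n - k) = F θ n * F (-θ) n * (F a k * F b (n - k)) := by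
      rw [F_mul, add_neg_cancel, F_zero, one_mul]
    rw [h1]
    calc F θ n * F (-θ) n * (F a k * F b (n - k))
        ≤ F θ n * (ENNReal.ofReal (2 ^ θ) * (F (-θ) k + F (-θ) (n - k))) *
            (F a k * F b (n - k)) := by
          exact mul_le_mul_left (mul_le_mul_right (hkey k) _) _
      _ = ENNReal.ofReal (2 ^ θ) * F θ n *
            ((F (-θ) k * F a k) * F b (n - k) + F a k * (F (-θ) (n - k) * F b (n - k))) := by
          ring
      _ = ENNReal.ofReal (2 ^ θ) * F θ n *
            (F (a - θ) k * F b (n - k) + F a k * F (b - θ) (n - k)) := by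
          rw [F_mul, F_mul]; ring_nf
  calc ∑' k : ℤ, F a k * F b (n - k)
      ≤ ∑' k : ℤ, ENNReal.ofReal (2 ^ θ) * F θ n *
          (F (a - θ) k * F b (n - k) + F a k * F (b - θ) (n - k)) := ENNReal.tsum_le_tsum hpt
    _ = ENNReal.ofReal (2 ^ θ) * F θ n *
          ((∑' k : ℤ, F (a - θ) k * F b (n - k)) + ∑' k : ℤ, F a k * F (b - θ) (n - k)) := by
        rw [ENNReal.tsum_mul_left, ENNReal.tsum_add]
    _ ≤ ENNReal.ofReal (2 ^ θ) * F θ n * (2 * Z ((a - θ) + b) + 2 * Z (a + (b - θ))) := by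
        refine mul_le_mul_right (add_le_add ?_ ?_) _
        · exact lemB (by linarith) (by linarith) n
        · exact lemB (by linarith) (by linarith) n
    _ = ENNReal.ofReal (2 ^ θ) * (4 * Z (a + b - θ)) * F θ n := by
        rw [show (a - θ) + b = a + b - θ by ring, show a + (b - θ) = a + b - θ by ring]
        ring

set_option maxHeartbeats 2000000 in
lemma Sbound {s β θ₁ θ₂ : ℝ}
    (h1 : 0 < θ₁) (h2 : θ₁ < β) (h3 : θ₁ < s) (h4 : θ₁ < β + s - 1)
    (h5 : 0 < θ₂) (h6 : θ₂ < β) (h7 : θ₂ < θ₁) (h8 : θ₂ < β + θ₁ - 1) :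
    (∑' p : ℤ × ℤ × ℤ, F s (p.1 - p.2.1 + p.2.2) * (F β p.1 * F β p.2.1 * F β p.2.2)) ≤
      (ENNReal.ofReal (2 ^ θ₁) * (4 * Z (β + s - θ₁))) *
        ((ENNReal.ofReal (2 ^ θ₂) * (4 * Z (β + θ₁ - θ₂))) * Z (β + θ₂)) := by
  set A₁ := ENNReal.ofReal (2 ^ θ₁) * (4 * Z (β + s - θ₁)) with hA₁
  set A₂ := ENNReal.ofReal (2 ^ θ₂) * (4 * Z (β + θ₁ - θ₂)) with hA₂
  have inner1 : ∀ n₂ n₃ : ℤ,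
      (∑' n₁ : ℤ, F s (n₁ - n₂ + n₃) * (F β n₁ * F β n₂ * F β n₃)) ≤
        F β n₂ * F β n₃ * (A₁ * F θ₁ (n₂ - n₃)) := by
    intro n₂ n₃
    have hrw : ∀ n₁ : ℤ, F s (n₁ - n₂ + n₃) * (F β n₁ * F β n₂ * F β n₃) =
        F β n₂ * F β n₃ * (F β n₁ * F s ((n₂ - n₃) - n₁)) := by
      intro n₁
      rw [show (n₂ - n₃) - n₁ = -(n₁ - n₂ + n₃) by ring, F_neg]
      ring
    rw [tsum_congr hrw, ENNReal.tsum_mul_left]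
    exact mul_le_mul_right (lemA h1 h2 h3 h4 (n₂ - n₃)) _
  have inner2 : ∀ n₂ : ℤ,
      (∑' n₃ : ℤ, F β n₂ * F β n₃ * (A₁ * F θ₁ (n₂ - n₃))) ≤
        F β n₂ * A₁ * (A₂ * F θ₂ n₂) := by
    intro n₂
    have hrw : ∀ n₃ : ℤ, F β n₂ * F β n₃ * (A₁ * F θ₁ (n₂ - n₃)) =
        F β n₂ * A₁ * (F β n₃ * F θ₁ (n₂ - n₃)) := fun n₃ => by ring
    rw [tsum_congr hrw, ENNReal.tsum_mul_left]
    exact mul_le_mul_right (lemA h5 h6 h7 h8 n₂) _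
  calc (∑' p : ℤ × ℤ × ℤ, F s (p.1 - p.2.1 + p.2.2) * (F β p.1 * F β p.2.1 * F β p.2.2))
      = ∑' n₁ : ℤ, ∑' q : ℤ × ℤ, F s (n₁ - q.1 + q.2) * (F β n₁ * F β q.1 * F β q.2) :=
        ENNReal.tsum_prod (f := fun (n₁ : ℤ) (q : ℤ × ℤ) => F s (n₁ - q.1 + q.2) * (F β n₁ * F β q.1 * F β q.2))
    _ = ∑' q : ℤ × ℤ, ∑' n₁ : ℤ, F s (n₁ - q.1 + q.2) * (F β n₁ * F β q.1 * F β q.2) :=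
        ENNReal.tsum_comm
    _ = ∑' n₂ : ℤ, ∑' n₃ : ℤ, ∑' n₁ : ℤ,
          F s (n₁ - n₂ + n₃) * (F β n₁ * F β n₂ * F β n₃) :=
        ENNReal.tsum_prod (f := fun (n₂ n₃ : ℤ) => ∑' n₁ : ℤ,
          F s (n₁ - n₂ + n₃) * (F β n₁ * F β n₂ * F β n₃))
    _ ≤ ∑' n₂ : ℤ, ∑' n₃ : ℤ, F β n₂ * F β n₃ * (A₁ * F θ₁ (n₂ - n₃)) := by
        refine ENNReal.tsum_le_tsum fun n₂ => ENNReal.tsum_le_tsum fun n₃ => ?_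
        exact inner1 n₂ n₃
    _ ≤ ∑' n₂ : ℤ, F β n₂ * A₁ * (A₂ * F θ₂ n₂) :=
        ENNReal.tsum_le_tsum fun n₂ => inner2 n₂
    _ = A₁ * A₂ * ∑' n₂ : ℤ, F β n₂ * F θ₂ n₂ := by
        rw [← ENNReal.tsum_mul_left]
        exact tsum_congr fun n₂ => by ring
    _ = A₁ * A₂ * Z (β + θ₂) := by
        rw [Z]; congr 1; exact tsum_congr fun n₂ => F_mul β θ₂ n₂
    _ = A₁ * (A₂ * Z (β + θ₂)) := by ring

lemma triprod {a1 a2 a3 b1 b2 b3 g e : ℝ} (hg : 0 ≤ g) (he : 0 ≤ e)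
    (ha2 : 0 ≤ a2) (ha3 : 0 ≤ a3) (hb1 : 0 ≤ b1) (hb2 : 0 ≤ b2) (hb3 : 0 ≤ b3)
    (h1 : a1 ≤ e * b1) (h2 : a2 ≤ b2) (h3 : a3 ≤ b3) :
    g * (a1 * a2 * a3) ≤ e * (g * (b1 * b2 * b3)) := by
  have k1 : a1 * a2 ≤ (e * b1) * b2 :=
    mul_le_mul h1 h2 ha2 (mul_nonneg he hb1)
  have k2 : a1 * a2 * a3 ≤ (e * b1) * b2 * b3 :=
    mul_le_mul k1 h3 ha3 (mul_nonneg (mul_nonneg he hb1) hb2)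
  calc g * (a1 * a2 * a3) ≤ g * ((e * b1) * b2 * b3) := mul_le_mul_of_nonneg_left k2 hg
    _ = e * (g * (b1 * b2 * b3)) := by ring

/-- Trilinear tail sum estimate for the renormalized cubic nonlinearity, `2/3 < α ≤ 1`. -/
theorem trilinear_tail_sum (α σ : ℝ) (hα₁ : 2 / 3 < α) (hα₂ : α ≤ 1)
    (hσ : 3 * (1 - α) / 2 < σ) :
    ∃ ε₀ > 0, ∃ C > 0, ∀ M : ℝ, 1 ≤ M →
      (∑' p : ℤ × ℤ × ℤ,
          if p.2.1 ≠ p.1 ∧ p.2.1 ≠ p.2.2 ∧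
              M < max |(p.1 : ℝ)| (max |(p.2.1 : ℝ)| |(p.2.2 : ℝ)|) then
            ENNReal.ofReal
              (jb ((p.1 - p.2.1 + p.2.2 : ℤ) : ℝ) ^ (-(2 * σ)) *
                (jb (p.1 : ℝ) ^ (-α) * jb (p.2.1 : ℝ) ^ (-α) * jb (p.2.2 : ℝ) ^ (-α)))
          else 0)
        ≤ ENNReal.ofReal (C * M ^ (-ε₀ : ℝ)) := by
  have hσ0 : 0 < σ := by nlinarith
  set ε : ℝ := min ((α - 2/3)/2) ((2*σ - 3*(1-α))/12) with hεdef
  have hε1 : ε ≤ (α - 2/3)/2 := min_le_left _ _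
  have hε2 : ε ≤ (2*σ - 3*(1-α))/12 := min_le_right _ _
  have hε0 : 0 < ε := lt_min (by linarith) (by linarith)
  set β : ℝ := α - ε with hβdef
  have hβ23 : 2/3 < β := by simp only [hβdef]; linarith
  have hβ1 : β < 1 := by simp only [hβdef]; linarith
  have hsβ : 3 * (1 - β) < 2 * σ := by simp only [hβdef]; linarith
  have hβs1 : 1 < β + 2*σ := by linarith
  -- choose θ₁
  set m₁ : ℝ := min β (min (2*σ) (β + 2*σ - 1)) with hm₁def
  have hm1b : m₁ ≤ β := min_le_left _ _
  have hm1s : m₁ ≤ 2*σ := le_trans (min_le_right _ _) (min_le_left _ _)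
  have hm1c : m₁ ≤ β + 2*σ - 1 := le_trans (min_le_right _ _) (min_le_right _ _)
  have hm1 : 2 - 2*β < m₁ :=
    lt_min (by linarith) (lt_min (by linarith) (by linarith))
  set θ₁ : ℝ := (2 - 2*β + m₁)/2 with hθ₁def
  have hθ₁gt : 2 - 2*β < θ₁ := by simp only [hθ₁def]; linarith
  have hθ₁lt : θ₁ < m₁ := by simp only [hθ₁def]; linarith
  have hθ₁0 : 0 < θ₁ := by linarith
  -- choose θ₂
  set m₂ : ℝ := min β (min θ₁ (β + θ₁ - 1)) with hm₂def
  have hm2b : m₂ ≤ β := min_le_left _ _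
  have hm2t : m₂ ≤ θ₁ := le_trans (min_le_right _ _) (min_le_left _ _)
  have hm2c : m₂ ≤ β + θ₁ - 1 := le_trans (min_le_right _ _) (min_le_right _ _)
  have hm2 : 1 - β < m₂ :=
    lt_min (by linarith) (lt_min (by linarith) (by linarith))
  set θ₂ : ℝ := (1 - β + m₂)/2 with hθ₂def
  have hθ₂gt : 1 - β < θ₂ := by simp only [hθ₂def]; linarith
  have hθ₂lt : θ₂ < m₂ := by simp only [hθ₂def]; linarith
  have hθ₂0 : 0 < θ₂ := by linarith
  -- the constant
  set K : ℝ≥0∞ := (ENNReal.ofReal (2 ^ θ₁) * (4 * Z (β + 2*σ - θ₁))) *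
      ((ENNReal.ofReal (2 ^ θ₂) * (4 * Z (β + θ₁ - θ₂))) * Z (β + θ₂)) with hKdef
  have hSb := Sbound (s := 2*σ) (β := β) (θ₁ := θ₁) (θ₂ := θ₂)
    hθ₁0 (by linarith) (by linarith) (by linarith)
    hθ₂0 (by linarith) (by linarith) (by linarith)
  have h4ne : (4 : ℝ≥0∞) ≠ ⊤ := by norm_num
  have hKne : K ≠ ⊤ := by
    refine ENNReal.mul_ne_top (ENNReal.mul_ne_top ENNReal.ofReal_ne_top
      (ENNReal.mul_ne_top h4ne (Z_ne_top (by linarith)))) ?_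
    exact ENNReal.mul_ne_top (ENNReal.mul_ne_top ENNReal.ofReal_ne_top
      (ENNReal.mul_ne_top h4ne (Z_ne_top (by linarith))))
      (Z_ne_top (by linarith))
  refine ⟨ε, hε0, K.toReal + 1, by positivity, fun M hM => ?_⟩
  have hM0 : (0:ℝ) < M := by linarith
  have hMε : 0 ≤ M ^ (-ε) := Real.rpow_nonneg hM0.le _
  -- pointwise bound
  have hpt : ∀ p : ℤ × ℤ × ℤ,
      (if p.2.1 ≠ p.1 ∧ p.2.1 ≠ p.2.2 ∧
          M < max |(p.1 : ℝ)| (max |(p.2.1 : ℝ)| |(p.2.2 : ℝ)|) then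
        ENNReal.ofReal
          (jb ((p.1 - p.2.1 + p.2.2 : ℤ) : ℝ) ^ (-(2 * σ)) *
            (jb (p.1 : ℝ) ^ (-α) * jb (p.2.1 : ℝ) ^ (-α) * jb (p.2.2 : ℝ) ^ (-α)))
      else 0) ≤
      ENNReal.ofReal (M ^ (-ε)) *
        (F (2*σ) (p.1 - p.2.1 + p.2.2) * (F β p.1 * F β p.2.1 * F β p.2.2)) := by
    rintro ⟨n₁, n₂, n₃⟩
    simp only
    split_ifs with hc
    · obtain ⟨-, -, hmax⟩ := hc
      set G : ℝ := jb ((n₁ - n₂ + n₃ : ℤ) : ℝ) ^ (-(2 * σ)) with hGdef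
      have hG0 : 0 ≤ G := Real.rpow_nonneg (jb_pos _).le _
      have key : ∀ x : ℝ, M < |x| → jb x ^ (-α) ≤ M ^ (-ε) * jb x ^ (-β) := by
        intro x hx
        have h1 : M < jb x := lt_of_lt_of_le hx (abs_le_jb x)
        have hsplit : jb x ^ (-α) = jb x ^ (-ε) * jb x ^ (-β) := by
          rw [← Real.rpow_add (jb_pos x)]; congr 1; simp only [hβdef]; ring
        rw [hsplit]
        exact mul_le_mul_of_nonneg_right
          (Real.rpow_le_rpow_of_nonpos hM0 h1.le (by linarith))
          (Real.rpow_nonneg (jb_pos x).le _)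
      have key2 : ∀ x : ℝ, jb x ^ (-α) ≤ jb x ^ (-β) := fun x =>
        Real.rpow_le_rpow_of_exponent_le (one_le_jb x) (by linarith)
      have hnn : ∀ (x : ℝ) (t : ℝ), (0:ℝ) ≤ jb x ^ t := fun x t =>
        Real.rpow_nonneg (jb_pos x).le _
      -- real inequality
      have hre : G * (jb (n₁ : ℝ) ^ (-α) * jb (n₂ : ℝ) ^ (-α) * jb (n₃ : ℝ) ^ (-α)) ≤
          M ^ (-ε) * (G * (jb (n₁ : ℝ) ^ (-β) * jb (n₂ : ℝ) ^ (-β) * jb (n₃ : ℝ) ^ (-β))) := by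
        rcases lt_max_iff.mp hmax with h | h'
        · exact triprod hG0 hMε (hnn _ _) (hnn _ _) (hnn _ _) (hnn _ _) (hnn _ _)
            (key _ h) (key2 _) (key2 _)
        · rcases lt_max_iff.mp h' with h | h
          · calc G * (jb (n₁:ℝ) ^ (-α) * jb (n₂:ℝ) ^ (-α) * jb (n₃:ℝ) ^ (-α))
                = G * (jb (n₂:ℝ) ^ (-α) * jb (n₁:ℝ) ^ (-α) * jb (n₃:ℝ) ^ (-α)) := by ring
              _ ≤ M ^ (-ε) * (G * (jb (n₂:ℝ) ^ (-β) * jb (n₁:ℝ) ^ (-β) * jb (n₃:ℝ) ^ (-β))) :=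
                  triprod hG0 hMε (hnn _ _) (hnn _ _) (hnn _ _) (hnn _ _) (hnn _ _)
                    (key _ h) (key2 _) (key2 _)
              _ = M ^ (-ε) * (G * (jb (n₁:ℝ) ^ (-β) * jb (n₂:ℝ) ^ (-β) * jb (n₃:ℝ) ^ (-β))) := by
                  ring
          · calc G * (jb (n₁:ℝ) ^ (-α) * jb (n₂:ℝ) ^ (-α) * jb (n₃:ℝ) ^ (-α))
                = G * (jb (n₃:ℝ) ^ (-α) * jb (n₁:ℝ) ^ (-α) * jb (n₂:ℝ) ^ (-α)) := by ring
              _ ≤ M ^ (-ε) * (G * (jb (n₃:ℝ) ^ (-β) * jb (n₁:ℝ) ^ (-β) * jb (n₂:ℝ) ^ (-β))) :=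
                  triprod hG0 hMε (hnn _ _) (hnn _ _) (hnn _ _) (hnn _ _) (hnn _ _)
                    (key _ h) (key2 _) (key2 _)
              _ = M ^ (-ε) * (G * (jb (n₁:ℝ) ^ (-β) * jb (n₂:ℝ) ^ (-β) * jb (n₃:ℝ) ^ (-β))) := by
                  ring
      -- convert to ENNReal
      have hq : ENNReal.ofReal (M ^ (-ε)) *
          (F (2*σ) (n₁ - n₂ + n₃) * (F β n₁ * F β n₂ * F β n₃)) =
          ENNReal.ofReal (M ^ (-ε) *
            (jb ((n₁ - n₂ + n₃ : ℤ) : ℝ) ^ (-(2*σ)) *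
              (jb (n₁ : ℝ) ^ (-β) * jb (n₂ : ℝ) ^ (-β) * jb (n₃ : ℝ) ^ (-β)))) := by
        rw [F, F, F, F, ← ENNReal.ofReal_mul (hnn _ _), ← ENNReal.ofReal_mul
          (mul_nonneg (hnn _ _) (hnn _ _)), ← ENNReal.ofReal_mul (hnn _ _),
          ← ENNReal.ofReal_mul hMε]
      rw [hq]
      exact ENNReal.ofReal_le_ofReal hre
    · exact zero_le
  calc (∑' p : ℤ × ℤ × ℤ,
        if p.2.1 ≠ p.1 ∧ p.2.1 ≠ p.2.2 ∧
            M < max |(p.1 : ℝ)| (max |(p.2.1 : ℝ)| |(p.2.2 : ℝ)|) then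
          ENNReal.ofReal
            (jb ((p.1 - p.2.1 + p.2.2 : ℤ) : ℝ) ^ (-(2 * σ)) *
              (jb (p.1 : ℝ) ^ (-α) * jb (p.2.1 : ℝ) ^ (-α) * jb (p.2.2 : ℝ) ^ (-α)))
        else 0)
      ≤ ∑' p : ℤ × ℤ × ℤ, ENNReal.ofReal (M ^ (-ε)) *
          (F (2*σ) (p.1 - p.2.1 + p.2.2) * (F β p.1 * F β p.2.1 * F β p.2.2)) :=
        ENNReal.tsum_le_tsum hpt
    _ = ENNReal.ofReal (M ^ (-ε)) * ∑' p : ℤ × ℤ × ℤ,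
          F (2*σ) (p.1 - p.2.1 + p.2.2) * (F β p.1 * F β p.2.1 * F β p.2.2) :=
        ENNReal.tsum_mul_left
    _ ≤ ENNReal.ofReal (M ^ (-ε)) * K := mul_le_mul_right hSb _
    _ ≤ ENNReal.ofReal (M ^ (-ε)) * ENNReal.ofReal (K.toReal + 1) := by
        refine mul_le_mul_right ?_ _
        conv_lhs => rw [← ENNReal.ofReal_toReal hKne]
        exact ENNReal.ofReal_le_ofReal (by linarith [ENNReal.toReal_nonneg (a := K)])
    _ = ENNReal.ofReal ((K.toReal + 1) * M ^ (-ε)) := by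
        rw [← ENNReal.ofReal_mul hMε, mul_comm]
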